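/- Let v_1,…,v_n be distinct unit vectors in ℂ^d such that the real parts of the inner products ⟨v_j,v_k⟩ (j ≠ k) take at most s distinct values. Then n ≤ C(s+2d−1, 2d−1) + C(s+2d−2, 2d−1). -/

import Mathlib

open MvPolynomial Finset

/-- Auxiliary linear-algebra bound: if `y k` are vectors in `ℝ^ι` (`ι` a fintype of
cardinality `m`) lying on the unit sphere, and the pairwise dot products lie in a set `b`
of at most `s ≥ 1` values not containing `1`, then `n` is bounded by the dimension of the
space of polynomials of degree `s` and `s-1` restricted to the sphere. -/
theorem aux_sphere_bound (d s n : ℕ) (hd : 1 ≤ d) (hs : 1 ≤ s)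
    (y : Fin n → (Fin d ⊕ Fin d) → ℝ)
    (hnorm : ∀ k, ∑ i, y k i ^ 2 = 1)
    (b : Finset ℝ) (hb : b.card ≤ s) (h1b : (1 : ℝ) ∉ b)
    (hy : ∀ j k, j ≠ k → (∑ i, y j i * y k i) ∈ b)
    (hyy : ∀ k, (∑ i, y k i * y k i) = 1) :
    n ≤ Fintype.card (Sym (Fin d ⊕ Fin d) s ⊕ Sym (Fin d ⊕ Fin d) (s - 1)) := by
  classical
  -- the evaluation linear map
  let ev : MvPolynomial (Fin d ⊕ Fin d) ℝ →ₗ[ℝ] (Fin n → ℝ) :=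
    LinearMap.pi fun k => (MvPolynomial.aeval (y k)).toLinearMap
  have hev : ∀ p k, ev p k = MvPolynomial.eval (y k) p := by
    intro p k
    simp only [ev, LinearMap.pi_apply, AlgHom.toLinearMap_apply]
    rw [← MvPolynomial.coe_aeval_eq_eval]
    rfl
  -- the polynomials
  let L : Fin n → MvPolynomial (Fin d ⊕ Fin d) ℝ := fun j => ∑ i : Fin d ⊕ Fin d, MvPolynomial.C (y j i) * X i
  let F : Fin n → MvPolynomial (Fin d ⊕ Fin d) ℝ := fun j => ∏ α ∈ b, (L j - MvPolynomial.C α)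
  have hevalL : ∀ j k, MvPolynomial.eval (y k) (L j) = ∑ i, y j i * y k i := by
    intro j k; simp [L]
  have hevalF : ∀ j k,
      MvPolynomial.eval (y k) (F j) = ∏ α ∈ b, ((∑ i, y j i * y k i) - α) := by
    intro j k
    rw [show F j = ∏ α ∈ b, (L j - MvPolynomial.C α) from rfl, map_prod]
    refine Finset.prod_congr rfl fun α _ => ?_
    rw [map_sub, hevalL, MvPolynomial.eval_C]
  have hdegF : ∀ j, (F j).totalDegree ≤ s := by
    intro j
    refine le_trans (MvPolynomial.totalDegree_finset_prod _ _) (le_trans ?_ hb)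
    have hfac : ∀ α : ℝ, (L j - MvPolynomial.C α).totalDegree ≤ 1 := by
      intro α
      have h' : L j - MvPolynomial.C α = L j + MvPolynomial.C (-α) := by
        rw [map_neg, ← sub_eq_add_neg]
      rw [h']
      refine le_trans (MvPolynomial.totalDegree_add _ _) (max_le ?_ ?_)
      · refine le_trans (MvPolynomial.totalDegree_finset_sum _ _) (Finset.sup_le fun i _ => ?_)
        refine le_trans (MvPolynomial.totalDegree_mul _ _) ?_
        simp [MvPolynomial.totalDegree_C, MvPolynomial.totalDegree_X]
      · simp [MvPolynomial.totalDegree_C]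
    refine le_trans (Finset.sum_le_card_nsmul b _ 1 fun α _ => hfac α) ?_
    simp
  -- the norm polynomial
  let N : MvPolynomial (Fin d ⊕ Fin d) ℝ := ∑ i : Fin d ⊕ Fin d, X i ^ 2
  have hNhom : N.IsHomogeneous 2 := by
    refine MvPolynomial.IsHomogeneous.sum _ _ _ fun i _ => ?_
    simpa using MvPolynomial.isHomogeneous_X_pow (R := ℝ) i 2
  have hevalN : ∀ k, MvPolynomial.eval (y k) N = 1 := by
    intro k
    rw [show N = ∑ i : Fin d ⊕ Fin d, X i ^ 2 from rfl, map_sum]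
    simp only [map_pow, MvPolynomial.eval_X]
    exact hnorm k
  -- the monomial family
  let Ψ : (Sym (Fin d ⊕ Fin d) s ⊕ Sym (Fin d ⊕ Fin d) (s - 1)) → (Fin n → ℝ) := fun z =>
    ev (MvPolynomial.monomial (Multiset.toFinsupp (Sum.elim Subtype.val Subtype.val z)) 1)
  -- every homogeneous polynomial of degree s or s-1 evaluates into the span of Ψ
  have key : ∀ (t : ℕ), (t = s ∨ t = s - 1) → ∀ p : MvPolynomial (Fin d ⊕ Fin d) ℝ, p.IsHomogeneous t →
      ev p ∈ Submodule.span ℝ (Set.range Ψ) := by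
    intro t ht p hp
    rw [← p.support_sum_monomial_coeff, map_sum]
    refine Submodule.sum_mem _ fun μ hμ => ?_
    have hcoeff : MvPolynomial.coeff μ p ≠ 0 := MvPolynomial.mem_support_iff.mp hμ
    have hdeg : (Finsupp.weight 1 μ : ℕ) = t := hp hcoeff
    have hcard : Multiset.card (Finsupp.toMultiset μ) = t := by
      rw [Finsupp.card_toMultiset]
      rw [← hdeg, Finsupp.weight_apply]
      simp [Finsupp.sum]
    have hmono : (MvPolynomial.monomial μ) (MvPolynomial.coeff μ p)
        = MvPolynomial.coeff μ p • (MvPolynomial.monomial μ) 1 := by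
      rw [MvPolynomial.smul_monomial, smul_eq_mul, mul_one]
    rw [hmono, map_smul]
    refine Submodule.smul_mem _ _ (Submodule.subset_span ?_)
    rcases ht with h | h
    · exact ⟨Sum.inl ⟨Finsupp.toMultiset μ, by rw [hcard, h]⟩, by
        exact congrArg (fun q => ev (MvPolynomial.monomial q 1))
          (Multiset.toFinsupp_eq_iff.mpr rfl : Multiset.toFinsupp (Finsupp.toMultiset μ) = μ)⟩
    · exact ⟨Sum.inr ⟨Finsupp.toMultiset μ, by rw [hcard, h]⟩, by
        exact congrArg (fun q => ev (MvPolynomial.monomial q 1))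
          (Multiset.toFinsupp_eq_iff.mpr rfl : Multiset.toFinsupp (Finsupp.toMultiset μ) = μ)⟩
  -- the evaluated annihilator polynomials lie in the span of Ψ
  have hFspan : ∀ j, ev (F j) ∈ Submodule.span ℝ (Set.range Ψ) := by
    intro j
    have hdecomp : F j = ∑ k ∈ Finset.range (s + 1),
        MvPolynomial.homogeneousComponent k (F j) := by
      conv_lhs => rw [← MvPolynomial.sum_homogeneousComponent (F j)]
      refine Finset.sum_subset (Finset.range_subset_range.mpr ?_) fun k _ hk => ?_
      · have := hdegF j; omega
      · refine MvPolynomial.homogeneousComponent_eq_zero _ _ ?_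
        simp only [Finset.mem_range, not_lt] at hk
        have := hdegF j; omega
    rw [hdecomp, map_sum]
    refine Submodule.sum_mem _ fun k hk => ?_
    rw [Finset.mem_range] at hk
    have hks : k ≤ s := by omega
    have hevmul : ∀ m : ℕ, ev (MvPolynomial.homogeneousComponent k (F j) * N ^ m)
        = ev (MvPolynomial.homogeneousComponent k (F j)) := by
      intro m
      funext x
      rw [hev, hev, map_mul, map_pow, hevalN, one_pow, mul_one]
    rcases Nat.even_or_odd (s - k) with he | ho
    · have he' := Nat.even_iff.mp he
      have h2m : k + 2 * ((s - k) / 2) = s := by omega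
      have hhom := (MvPolynomial.homogeneousComponent_isHomogeneous k (F j)).mul
        (hNhom.pow ((s - k) / 2))
      rw [h2m] at hhom
      rw [← hevmul ((s - k) / 2)]
      exact key s (Or.inl rfl) _ hhom
    · have ho' := Nat.odd_iff.mp ho
      have h2m : k + 2 * ((s - 1 - k) / 2) = s - 1 := by omega
      have hhom := (MvPolynomial.homogeneousComponent_isHomogeneous k (F j)).mul
        (hNhom.pow ((s - 1 - k) / 2))
      rw [h2m] at hhom
      rw [← hevmul ((s - 1 - k) / 2)]
      exact key (s - 1) (Or.inr rfl) _ hhom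
  -- the evaluated annihilator polynomials are linearly independent
  let e : Fin n → (Fin n → ℝ) := fun j => ev (F j)
  have hejk : ∀ j k : Fin n, j ≠ k → e j k = 0 := by
    intro j k hjk
    have hmem := hy j k hjk
    show ev (F j) k = 0
    rw [hev, hevalF]
    exact Finset.prod_eq_zero hmem (sub_self _)
  have hejj : ∀ j, e j j = ∏ α ∈ b, (1 - α) := by
    intro j
    show ev (F j) j = _
    rw [hev, hevalF]
    refine Finset.prod_congr rfl fun α _ => ?_
    rw [hyy j]
  have hc : (∏ α ∈ b, (1 - α)) ≠ 0 :=
    Finset.prod_ne_zero_iff.mpr fun α hα =>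
      sub_ne_zero.mpr fun h => h1b (h ▸ hα)
  have hli : LinearIndependent ℝ e := by
    rw [Fintype.linearIndependent_iff]
    intro g hg j
    have h := congrFun hg j
    simp only [Finset.sum_apply, Pi.smul_apply, smul_eq_mul, Pi.zero_apply] at h
    rw [Finset.sum_eq_single j] at h
    · rw [hejj] at h
      rcases mul_eq_zero.mp h with h' | h'
      · exact h'
      · exact absurd h' hc
    · intro c _ hcj
      rw [hejk c j hcj, mul_zero]
    · intro hj; exact absurd (Finset.mem_univ j) hj
  -- conclude by a dimension count
  have hspan_le : Submodule.span ℝ (Set.range e) ≤ Submodule.span ℝ (Set.range Ψ) :=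
    Submodule.span_le.mpr (Set.range_subset_iff.mpr hFspan)
  have h2 : Module.finrank ℝ ↥(Submodule.span ℝ (Set.range e)) = n := by
    rw [finrank_span_eq_card hli, Fintype.card_fin]
  have h3 : Module.finrank ℝ ↥(Submodule.span ℝ (Set.range Ψ))
      ≤ Fintype.card (Sym (Fin d ⊕ Fin d) s ⊕ Sym (Fin d ⊕ Fin d) (s - 1)) := by
    have hr : Set.range Ψ = ↑(Finset.image Ψ Finset.univ) := by
      simp
    rw [hr]
    refine le_trans (finrank_span_finset_le_card (R := ℝ) _) ?_
    exact le_trans (Finset.card_image_le) (by simp)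
  calc n = Module.finrank ℝ ↥(Submodule.span ℝ (Set.range e)) := h2.symm
    _ ≤ Module.finrank ℝ ↥(Submodule.span ℝ (Set.range Ψ)) :=
        Submodule.finrank_mono hspan_le
    _ ≤ _ := h3

/-- If the real parts of the pairwise inner products of `n` distinct unit vectors in
`ℂ^d` take at most `s` distinct values, then `n ≤ C(s+2d−1,2d−1) + C(s+2d−2,2d−1)`. -/
theorem real_part_values_bound (d : ℕ) (hd : 1 ≤ d) (s : ℕ)
    (n : ℕ) (v : Fin n → EuclideanSpace ℂ (Fin d))
    (hv : ∀ j, ‖v j‖ = 1) (hdist : Function.Injective v)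
    (a : Finset ℝ) (ha : a.card ≤ s)
    (hangles : ∀ j k, j ≠ k → ((inner ℂ (v j) (v k) : ℂ)).re ∈ a) :
    n ≤ Nat.choose (s + 2 * d - 1) (2 * d - 1) +
        Nat.choose (s + 2 * d - 2) (2 * d - 1) := by
  classical
  rcases Nat.eq_zero_or_pos s with hs0 | hs
  · -- if `s = 0` there are no allowed angles, so `n ≤ 1`
    subst hs0
    have haempty : a = ∅ := Finset.card_eq_zero.mp (Nat.le_zero.mp ha)
    have hn1 : n ≤ 1 := by
      by_contra h
      push_neg at h
      have h01 : (⟨0, by omega⟩ : Fin n) ≠ ⟨1, by omega⟩ := by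
        simp [Fin.ext_iff]
      have := hangles _ _ h01
      simp [haempty] at this
    have hch : 1 ≤ Nat.choose (0 + 2 * d - 1) (2 * d - 1) := by
      rw [show 0 + 2 * d - 1 = 2 * d - 1 by omega, Nat.choose_self]
    omega
  · -- main case: apply the sphere bound to the real coordinates
    let y : Fin n → (Fin d ⊕ Fin d) → ℝ := fun k => Sum.elim (fun i => (v k i).re) (fun i => (v k i).im)
    have hinner : ∀ j k, (inner ℂ (v j) (v k) : ℂ).re = ∑ i : Fin d ⊕ Fin d, y j i * y k i := by
      intro j k
      rw [PiLp.inner_apply]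
      calc (∑ i, inner ℂ (v j i) (v k i) : ℂ).re
          = ∑ i, ((v j i).re * (v k i).re + (v j i).im * (v k i).im) := by
            rw [Complex.re_sum]
            refine Finset.sum_congr rfl fun i _ => ?_
            simp [RCLike.inner_apply, Complex.mul_re]; ring
      _ = ∑ i : Fin d ⊕ Fin d, y j i * y k i := by
            rw [Fintype.sum_sum_type]
            simp [y, Finset.sum_add_distrib]
    have hone : ∀ k, (inner ℂ (v k) (v k) : ℂ).re = 1 := by
      intro k
      have h := @inner_self_eq_norm_sq ℂ _ _ _ _ (v k)
      rw [hv k] at h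
      simpa using h
    have hyy : ∀ k, (∑ i : Fin d ⊕ Fin d, y k i * y k i) = 1 := by
      intro k
      rw [← hinner k k, hone k]
    have hnorm : ∀ k, ∑ i : Fin d ⊕ Fin d, y k i ^ 2 = 1 := by
      intro k
      simpa [sq] using hyy k
    have hne1 : ∀ j k, j ≠ k → (inner ℂ (v j) (v k) : ℂ).re ≠ 1 := by
      intro j k hjk h1
      have hsub := @norm_sub_sq ℂ _ _ _ _ (v j) (v k)
      rw [hv, hv] at hsub
      have hre : (RCLike.re (inner ℂ (v j) (v k) : ℂ) : ℝ) = 1 := by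
        rw [RCLike.re_to_complex]; exact h1
      rw [hre] at hsub
      norm_num at hsub
      exact hjk (hdist (sub_eq_zero.mp hsub))
    -- use `a.erase 1`
    have hmain := aux_sphere_bound d s n hd hs y hnorm (a.erase 1)
      (le_trans (Finset.card_erase_le) ha)
      (fun h => absurd rfl (Finset.ne_of_mem_erase h))
      (fun j k hjk => by
        rw [← hinner j k]
        exact Finset.mem_erase.mpr ⟨hne1 j k hjk, hangles j k hjk⟩)
      hyy
    refine le_trans hmain ?_
    rw [Fintype.card_sum, Sym.card_sym_eq_multichoose, Sym.card_sym_eq_multichoose,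
      Nat.multichoose_eq, Nat.multichoose_eq]
    have hcι : Fintype.card (Fin d ⊕ Fin d) = 2 * d := by
      simp [two_mul]
    rw [hcι]
    have e1 : (2 * d + s - 1).choose s = (s + 2 * d - 1).choose (2 * d - 1) := by
      rw [show 2 * d + s - 1 = s + 2 * d - 1 by omega]
      rw [← Nat.choose_symm (by omega : s ≤ s + 2 * d - 1)]
      congr 1
      omega
    have e2 : (2 * d + (s - 1) - 1).choose (s - 1) = (s + 2 * d - 2).choose (2 * d - 1) := by
      rw [show 2 * d + (s - 1) - 1 = s + 2 * d - 2 by omega]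
      rw [← Nat.choose_symm (by omega : s - 1 ≤ s + 2 * d - 2)]
      congr 1
      omega
    rw [e1, e2]
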